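/- Let ε ∈ (0, 1/10] and q ≥ 10 an integer, and let E be a symmetric n×n real matrix with 0 ⪯ E ⪯ (ε/q)·I. Then (I + E/(1 - ε/q))^q ⪯ I + q(1+ε)·E. -/

import Mathlib

open Matrix

private lemma exp_le_quad {t : ℝ} (h0 : 0 ≤ t) (h1 : t ≤ 1) :
    Real.exp t ≤ 1 + t + (3/4) * t ^ 2 := by
  have := Real.exp_bound' h0 h1 (n := 2) (by norm_num)
  simp [Finset.sum_range_succ, Nat.factorial] at this
  nlinarith [this]

private lemma scalar_key {q : ℕ} (hq : 10 ≤ q) {ε x : ℝ} (hε : 0 < ε) (hε1 : ε ≤ 1 / 10)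
    (hx : 0 ≤ x) (hx2 : x ≤ ε / q) :
    (1 + (1 - ε / q)⁻¹ * x) ^ q ≤ 1 + (q : ℝ) * (1 + ε) * x := by
  have hq' : (10 : ℝ) ≤ (q : ℝ) := by exact_mod_cast hq
  have hq0 : (0 : ℝ) < q := by linarith
  have hεq : ε / q ≤ 1 / 100 := by
    rw [div_le_div_iff₀ hq0 (by norm_num)]; nlinarith
  have hεq0 : 0 < ε / q := div_pos hε hq0
  obtain ⟨δ, hδ⟩ : ∃ δ : ℝ, δ = 1 - ε / q := ⟨_, rfl⟩
  rw [← hδ]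
  have hδpos : (99/100 : ℝ) ≤ δ := by rw [hδ]; linarith
  have hδ0 : (0:ℝ) < δ := by linarith
  obtain ⟨u, hu⟩ : ∃ u : ℝ, u = δ⁻¹ := ⟨_, rfl⟩
  rw [← hu]
  have huδ : δ * u = 1 := by rw [hu]; exact mul_inv_cancel₀ hδ0.ne'
  have hu0 : (0:ℝ) < u := by rw [hu]; positivity
  have hu1 : u ≤ 100/99 := by nlinarith
  have hu1' : 1 ≤ u := by nlinarith
  have hqx : (q : ℝ) * x ≤ ε := by
    have := (le_div_iff₀ hq0).mp hx2
    linarith [mul_comm x (q:ℝ)]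
  have h5 : u - 1 = (ε / q) * u := by linear_combination huδ - u * hδ
  have hεu : (q:ℝ) * (u - 1) = ε * u := by
    rw [h5, ← mul_assoc, mul_div_assoc', mul_comm (q:ℝ) ε, mul_div_assoc, div_self hq0.ne',
      mul_one]
  have t0 : (0:ℝ) ≤ (q:ℝ) * (u * x) := by positivity
  have h4 : (q:ℝ) * (u * x) ≤ (100/99) * ((q:ℝ) * x) := by
    have := mul_le_mul_of_nonneg_right hu1 (mul_nonneg hq0.le hx)
    linarith [this]
  have h4' : (q:ℝ) * (u * x) ≤ (100/99) * ε := by nlinarith [h4]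
  have ht1 : (q:ℝ) * (u * x) ≤ 1 := by linarith
  have step1 : (1 + u * x) ^ q ≤ Real.exp ((q:ℝ) * (u * x)) := by
    calc (1 + u * x) ^ q ≤ (Real.exp (u * x)) ^ q := by
          apply pow_le_pow_left₀ (by positivity)
          linarith [Real.add_one_le_exp (u * x)]
      _ = Real.exp ((q:ℝ) * (u * x)) := by rw [← Real.exp_nat_mul]
  have step2 : Real.exp ((q:ℝ) * (u * x)) ≤ 1 + (q:ℝ) * (u * x)
      + (3/4) * ((q:ℝ) * (u * x)) ^ 2 := exp_le_quad t0 ht1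
  have h1a : (q:ℝ) * (u * x) - (q:ℝ) * x = ε * u * x := by linear_combination x * hεu
  have h1 : (q:ℝ) * (u * x) - (q:ℝ) * x ≤ (100/99) * ε * x := by
    rw [h1a]
    have := mul_le_mul_of_nonneg_right hu1 (mul_nonneg hε.le hx)
    linarith [this]
  have h3a : ((q:ℝ) * (u * x)) * ((q:ℝ) * (u * x))
      ≤ ((100/99) * ε) * ((100/99) * ((q:ℝ) * x)) :=
    mul_le_mul h4' h4 t0 (by positivity)
  have h3 : (3/4) * ((q:ℝ) * (u * x)) ^ 2 ≤ (3/4) * (((100/99) * ε) * ((100/99) * ((q:ℝ) * x))) := by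
    rw [pow_two]; linarith
  have hD : (100/99) * ε * x ≤ (100/990) * ((q:ℝ) * x * ε) := by
    nlinarith [mul_nonneg (mul_nonneg hx hε.le) (by linarith : (0:ℝ) ≤ (q:ℝ) - 10)]
  have final : 1 + (q:ℝ) * (u * x) + (3/4) * ((q:ℝ) * (u * x)) ^ 2
      ≤ 1 + (q : ℝ) * (1 + ε) * x := by
    have hqxε : (0:ℝ) ≤ (q:ℝ) * x * ε := by positivity
    linarith [h1, h3, hD, hqxε]
  calc (1 + u * x) ^ q ≤ _ := step1
    _ ≤ _ := step2
    _ ≤ _ := final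

private lemma conj_pow_aux {n : ℕ} {U A : Matrix (Fin n) (Fin n) ℝ}
    (hU : U * star U = 1) (hU' : star U * U = 1) (m : ℕ) :
    (U * A * star U) ^ m = U * A ^ m * star U := by
  induction m with
  | zero => simp [hU]
  | succ k ih =>
    rw [pow_succ, pow_succ, ih]
    calc U * A ^ k * star U * (U * A * star U)
        = U * A ^ k * (star U * U) * A * star U := by
          simp only [Matrix.mul_assoc]
      _ = U * (A ^ k * A) * star U := by rw [hU']; simp only [Matrix.mul_one, Matrix.mul_assoc]

theorem pow_one_add_le {n q : ℕ} (hq : 10 ≤ q) (ε : ℝ) (hε : 0 < ε) (hε1 : ε ≤ 1 / 10)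
    (E : Matrix (Fin n) (Fin n) ℝ) (hE : E.PosSemidef)
    (hEle : ((ε / q) • (1 : Matrix (Fin n) (Fin n) ℝ) - E).PosSemidef) :
    ((1 + ((q : ℝ) * (1 + ε)) • E) - (1 + (1 - ε / q)⁻¹ • E) ^ q).PosSemidef := by
  have hH : E.IsHermitian := hE.1
  set U : Matrix (Fin n) (Fin n) ℝ := (hH.eigenvectorUnitary : Matrix (Fin n) (Fin n) ℝ)
    with hUdef
  have hUU : U * star U = 1 := mem_unitaryGroup_iff.mp hH.eigenvectorUnitary.2
  have hUU' : star U * U = 1 := mem_unitaryGroup_iff'.mp hH.eigenvectorUnitary.2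
  set d : Fin n → ℝ := hH.eigenvalues with hd
  have hspec : E = U * diagonal d * star U := by
    simpa using hH.spectral_theorem
  have e1 : ∀ c : ℝ, (1 : Matrix (Fin n) (Fin n) ℝ) + c • E
      = U * diagonal (fun i => 1 + c * d i) * star U := by
    intro c
    have hdiag : diagonal (fun i => 1 + c * d i)
        = (1 : Matrix (Fin n) (Fin n) ℝ) + c • diagonal d := by
      rw [← diagonal_one, ← diagonal_smul, ← diagonal_add]
      rfl
    rw [hdiag, Matrix.mul_add, Matrix.add_mul, Matrix.mul_one, hUU, Matrix.mul_smul,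
      Matrix.smul_mul, ← hspec]
  have key : (1 + ((q : ℝ) * (1 + ε)) • E) - (1 + (1 - ε / q)⁻¹ • E) ^ q
      = U * diagonal (fun i => (1 + (q : ℝ) * (1 + ε) * d i)
          - (1 + (1 - ε / q)⁻¹ * d i) ^ q) * star U := by
    rw [e1, e1, conj_pow_aux hUU hUU', diagonal_pow]
    rw [← Matrix.sub_mul, ← Matrix.mul_sub, ← diagonal_sub]
    rfl
  rw [key, Matrix.star_eq_conjTranspose]
  refine (posSemidef_diagonal_iff.mpr fun i => ?_).mul_mul_conjTranspose_same U
  have hd0 : 0 ≤ d i := hE.eigenvalues_nonneg i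
  have hv1 : star (⇑(hH.eigenvectorBasis i)) ⬝ᵥ ⇑(hH.eigenvectorBasis i) = (1:ℝ) := by
    simp only [← EuclideanSpace.inner_eq_star_dotProduct, real_inner_self_eq_norm_sq,
      hH.eigenvectorBasis.orthonormal.1 i]
    have h := real_inner_self_eq_norm_sq (hH.eigenvectorBasis i)
    rw [hH.eigenvectorBasis.orthonormal.1 i, EuclideanSpace.inner_eq_star_dotProduct] at h
    simpa using h
  have hdle : d i ≤ ε / q := by
    have hv := hEle.dotProduct_mulVec_nonneg (⇑(hH.eigenvectorBasis i))
    rw [Matrix.sub_mulVec, Matrix.smul_mulVec, Matrix.one_mulVec,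
      hH.mulVec_eigenvectorBasis, dotProduct_sub, dotProduct_smul,
      dotProduct_smul, hv1] at hv
    simpa using hv
  rw [sub_nonneg]
  exact scalar_key hq hε hε1 hd0 hdle
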